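/- Every connected paracompact locally small generalized topological space is Lindelöf, i.e., admits a countable admissible family of small open sets whose union is the whole space. -/

import Mathlib

/-- A generalized topological space (gts) in the sense of Delfs and Knebusch:
a family `Op` of open subsets of `X` together with a family `Cov` of admissible
families of open sets, satisfying finiteness, stability, transitivity,
saturation and regularity. -/
structure GTS (X : Type*) where
  Op : Set (Set X)
  Cov : Set (Set (Set X))
  cov_subset_op : ∀ 𝒰 ∈ Cov, 𝒰 ⊆ Op
  finiteness_sUnion : ∀ 𝒰 : Set (Set X), 𝒰 ⊆ Op → 𝒰.Finite → ⋃₀ 𝒰 ∈ Op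
  finiteness_sInter : ∀ 𝒰 : Set (Set X), 𝒰 ⊆ Op → 𝒰.Finite → ⋂₀ 𝒰 ∈ Op
  finiteness_cov : ∀ 𝒰 : Set (Set X), 𝒰 ⊆ Op → 𝒰.Finite → 𝒰 ∈ Cov
  stability : ∀ V ∈ Op, ∀ 𝒰 ∈ Cov, (fun U => V ∩ U) '' 𝒰 ∈ Cov
  transitivity : ∀ Φ : Set (Set (Set X)), Φ ⊆ Cov → Set.sUnion '' Φ ∈ Cov → ⋃₀ Φ ∈ Cov
  saturation : ∀ 𝒰 ∈ Cov, ∀ 𝒱 : Set (Set X), 𝒱 ⊆ Op → ⋃₀ 𝒱 = ⋃₀ 𝒰 →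
    (∀ U ∈ 𝒰, ∃ V ∈ 𝒱, U ⊆ V) → 𝒱 ∈ Cov
  regularity : ∀ W : Set X, ∀ 𝒰 ∈ Cov, (∀ U ∈ 𝒰, W ∩ U ∈ Op) → W ∩ ⋃₀ 𝒰 ∈ Op

/-- A subset `K` of a gts is small if every admissible family is essentially
finite on `K`. -/
def GTS.IsSmall {X : Type*} (G : GTS X) (K : Set X) : Prop :=
  ∀ 𝒰 ∈ G.Cov, ∃ 𝒰₀ ⊆ 𝒰, 𝒰₀.Finite ∧ K ∩ ⋃₀ 𝒰 ⊆ ⋃₀ 𝒰₀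

/-- A family of sets is essentially finite if some finite subfamily has the
same union. -/
def EssFinite {X : Type*} (𝒰 : Set (Set X)) : Prop :=
  ∃ 𝒰₀ ⊆ 𝒰, 𝒰₀.Finite ∧ ⋃₀ 𝒰₀ = ⋃₀ 𝒰

/-- A map between gtses is strictly continuous if preimages of admissible
families are admissible. -/
def StrictlyContinuous {X Y : Type*} (GX : GTS X) (GY : GTS Y) (f : X → Y) : Prop :=
  ∀ 𝒰 ∈ GY.Cov, (fun U => f ⁻¹' U) '' 𝒰 ∈ GX.Cov

/-- A gts is locally small if it has an admissible covering of the whole space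
by small open sets. -/
def GTS.LocallySmall {X : Type*} (G : GTS X) : Prop :=
  ∃ 𝒰 ∈ G.Cov, (∀ U ∈ 𝒰, G.IsSmall U) ∧ ⋃₀ 𝒰 = Set.univ

/-- A subset `C` of a gts is connected if there is no pair of open sets `U`, `V`
with `C ∩ U`, `C ∩ V` nonempty and disjoint and `C ⊆ U ∪ V`. -/
def GTS.IsConnectedSet {X : Type*} (G : GTS X) (C : Set X) : Prop :=
  ¬ ∃ U ∈ G.Op, ∃ V ∈ G.Op, (C ∩ U).Nonempty ∧ (C ∩ V).Nonempty ∧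
      Disjoint (C ∩ U) (C ∩ V) ∧ C ⊆ U ∪ V

/-- A locally small space is paracompact if it has a locally finite covering by
small open sets (a family of subsets is locally finite if each small open set
meets only finitely many of its members). -/
def GTS.ParacompactGTS {X : Type*} (G : GTS X) : Prop :=
  ∃ 𝒰 ⊆ G.Op, (∀ U ∈ 𝒰, G.IsSmall U) ∧ ⋃₀ 𝒰 = Set.univ ∧
    ∀ V ∈ G.Op, G.IsSmall V → {U ∈ 𝒰 | (V ∩ U).Nonempty}.Finite

/-- A gts is connected if the whole space is not the union of two disjoint
nonempty open sets. -/
def GTS.ConnectedSpace {X : Type*} (G : GTS X) : Prop :=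
  ¬ ∃ U ∈ G.Op, ∃ V ∈ G.Op, U.Nonempty ∧ V.Nonempty ∧ Disjoint U V ∧
      U ∪ V = Set.univ

theorem connected_paracompact_is_lindelof {X : Type*} (G : GTS X)
    (hls : G.LocallySmall) (hconn : G.ConnectedSpace) (hpc : G.ParacompactGTS) :
    ∃ 𝒰 ∈ G.Cov, 𝒰.Countable ∧ (∀ U ∈ 𝒰, G.IsSmall U) ∧ ⋃₀ 𝒰 = Set.univ := by
  classical
  by_cases hX : (Set.univ : Set X) = ∅
  · exact ⟨∅, G.finiteness_cov ∅ (Set.empty_subset _) Set.finite_empty,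
      Set.countable_empty, by simp, by simp [hX]⟩
  obtain ⟨𝒰, h𝒰op, h𝒰small, h𝒰univ, h𝒰lf⟩ := hpc
  obtain ⟨𝒮, h𝒮cov, h𝒮small, h𝒮univ⟩ := hls
  have h𝒮op : 𝒮 ⊆ G.Op := G.cov_subset_op 𝒮 h𝒮cov
  -- intersection of two open sets is open
  have hinter : ∀ A ∈ G.Op, ∀ B ∈ G.Op, A ∩ B ∈ G.Op := by
    intro A hA B hB
    have h := G.finiteness_sInter {A, B}
      (by intro s hs; rcases hs with rfl | rfl <;> assumption) (Set.toFinite _)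
    rwa [Set.sInter_pair] at h
  -- any subfamily of the locally finite cover has open union
  have hsub : ∀ 𝒱 ⊆ 𝒰, ⋃₀ 𝒱 ∈ G.Op := by
    intro 𝒱 h𝒱
    have hreg := G.regularity (⋃₀ 𝒱) 𝒮 h𝒮cov ?_
    · rwa [h𝒮univ, Set.inter_univ] at hreg
    intro S hS
    set T := (fun V => V ∩ S) '' {V ∈ 𝒱 | (S ∩ V).Nonempty} with hTdef
    have hTfin : T.Finite := by
      apply Set.Finite.image
      exact (h𝒰lf S (h𝒮op hS) (h𝒮small S hS)).subset (fun V hV => ⟨h𝒱 hV.1, hV.2⟩)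
    have hTop : T ⊆ G.Op := by
      rintro _ ⟨V, hV, rfl⟩
      exact hinter V (h𝒰op (h𝒱 hV.1)) S (h𝒮op hS)
    have heq : ⋃₀ 𝒱 ∩ S = ⋃₀ T := by
      ext x; constructor
      · rintro ⟨⟨V, hV, hxV⟩, hxS⟩
        exact ⟨V ∩ S, ⟨V, ⟨hV, ⟨x, hxS, hxV⟩⟩, rfl⟩, hxV, hxS⟩
      · rintro ⟨_, ⟨V, hV, rfl⟩, hxV, hxS⟩
        exact ⟨⟨V, hV.1, hxV⟩, hxS⟩
    rw [heq]
    exact G.finiteness_sUnion T hTop hTfin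
  -- pick a starting point
  have hne : (Set.univ : Set X).Nonempty := Set.nonempty_iff_ne_empty.mpr hX
  obtain ⟨x, -⟩ := hne
  have hx𝒰 : x ∈ ⋃₀ 𝒰 := by rw [h𝒰univ]; trivial
  obtain ⟨U₀, hU₀, hxU₀⟩ := hx𝒰
  -- the chain construction
  let F : ℕ → Set (Set X) := fun n =>
    Nat.rec {U₀} (fun _ Fn => Fn ∪ {U ∈ 𝒰 | ∃ U' ∈ Fn, (U ∩ U').Nonempty}) n
  have hF0 : F 0 = {U₀} := rfl
  have hFs : ∀ n, F (n + 1) = F n ∪ {U ∈ 𝒰 | ∃ U' ∈ F n, (U ∩ U').Nonempty} :=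
    fun n => rfl
  have hFsub : ∀ n, F n ⊆ 𝒰 := by
    intro n
    induction n with
    | zero => intro U hU; rw [hF0] at hU; rwa [Set.mem_singleton_iff.mp hU]
    | succ n ih =>
      rw [hFs]
      rintro U (hU | hU)
      · exact ih hU
      · exact hU.1
  have hFfin : ∀ n, (F n).Finite := by
    intro n
    induction n with
    | zero => rw [hF0]; exact Set.finite_singleton _
    | succ n ih =>
      rw [hFs]
      refine ih.union ?_
      have hcov : {U ∈ 𝒰 | ∃ U' ∈ F n, (U ∩ U').Nonempty} ⊆
          ⋃ U' ∈ F n, {U ∈ 𝒰 | (U' ∩ U).Nonempty} := by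
        rintro U ⟨hU, U', hU', hne'⟩
        exact Set.mem_biUnion hU' ⟨hU, by rwa [Set.inter_comm]⟩
      refine Set.Finite.subset ?_ hcov
      exact Set.Finite.biUnion ih (fun U' hU' =>
        h𝒰lf U' (h𝒰op (hFsub n hU')) (h𝒰small U' (hFsub n hU')))
  have hFmono : Monotone F := by
    apply monotone_nat_of_le_succ
    intro n
    rw [hFs]
    exact Set.subset_union_left
  set 𝒲 : Set (Set X) := ⋃ n, F n with h𝒲def
  have h𝒲sub : 𝒲 ⊆ 𝒰 := by
    rintro U hU
    obtain ⟨_, ⟨n, rfl⟩, hU⟩ := hU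
    exact hFsub n hU
  have hclosure : ∀ U ∈ 𝒰, ∀ U' ∈ 𝒲, (U ∩ U').Nonempty → U ∈ 𝒲 := by
    rintro U hU U' hU' hne'
    obtain ⟨_, ⟨n, rfl⟩, hU'⟩ := hU'
    refine Set.mem_iUnion.mpr ⟨n + 1, ?_⟩
    rw [hFs]
    exact Or.inr ⟨hU, U', hU', hne'⟩
  have hU₀𝒲 : U₀ ∈ 𝒲 := Set.mem_iUnion.mpr ⟨0, by rw [hF0]; rfl⟩
  -- connectedness argument
  have hWopen : ⋃₀ 𝒲 ∈ G.Op := hsub 𝒲 h𝒲sub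
  have hVopen : ⋃₀ (𝒰 \ 𝒲) ∈ G.Op := hsub _ Set.diff_subset
  have hdisj : Disjoint (⋃₀ 𝒲) (⋃₀ (𝒰 \ 𝒲)) := by
    rw [Set.disjoint_left]
    rintro y ⟨U', hU', hyU'⟩ ⟨U, hU, hyU⟩
    exact hU.2 (hclosure U hU.1 U' hU' ⟨y, hyU, hyU'⟩)
  have hcover : ⋃₀ 𝒲 ∪ ⋃₀ (𝒰 \ 𝒲) = Set.univ := by
    rw [← Set.sUnion_union, Set.union_diff_cancel h𝒲sub, h𝒰univ]
  have hVempty : ⋃₀ (𝒰 \ 𝒲) = ∅ := by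
    by_contra h
    exact hconn ⟨⋃₀ 𝒲, hWopen, ⋃₀ (𝒰 \ 𝒲), hVopen, ⟨x, U₀, hU₀𝒲, hxU₀⟩,
      Set.nonempty_iff_ne_empty.mpr h, hdisj, hcover⟩
  have hWuniv : ⋃₀ 𝒲 = Set.univ := by
    rw [← hcover, hVempty, Set.union_empty]
  -- admissibility via saturation and transitivity
  have hΦcov : Set.range F ⊆ G.Cov := by
    rintro _ ⟨n, rfl⟩
    exact G.finiteness_cov (F n) (fun U hU => h𝒰op (hFsub n hU)) (hFfin n)
  have hVUcov : Set.sUnion '' Set.range F ∈ G.Cov := by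
    refine G.saturation 𝒮 h𝒮cov _ ?_ ?_ ?_
    · rintro _ ⟨_, ⟨n, rfl⟩, rfl⟩
      exact hsub (F n) (hFsub n)
    · rw [h𝒮univ]
      apply Set.eq_univ_of_univ_subset
      rw [← hWuniv]
      rintro y ⟨U, hU, hyU⟩
      obtain ⟨_, ⟨n, rfl⟩, hUn⟩ := hU
      exact ⟨⋃₀ F n, ⟨F n, ⟨n, rfl⟩, rfl⟩, U, hUn, hyU⟩
    · intro S hS
      set T := {U ∈ 𝒰 | (S ∩ U).Nonempty} with hTdef
      have hTfin : T.Finite := h𝒰lf S (h𝒮op hS) (h𝒮small S hS)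
      have hT𝒲 : T ⊆ 𝒲 := by
        intro U hU
        by_contra hU𝒲
        obtain ⟨y, hyS, hyU⟩ := hU.2
        have : y ∈ ⋃₀ (𝒰 \ 𝒲) := ⟨U, ⟨hU.1, hU𝒲⟩, hyU⟩
        rw [hVempty] at this
        exact this
      have key : ∀ T' : Set (Set X), T'.Finite → T' ⊆ 𝒲 → ∃ N, T' ⊆ F N := by
        intro T' hT'
        refine Set.Finite.induction_on T' hT' (fun _ => ⟨0, Set.empty_subset _⟩) ?_
        intro a s _ _ ih hsub'
        obtain ⟨N, hN⟩ := ih (fun u hu => hsub' (Set.mem_insert_of_mem a hu))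
        obtain ⟨_, ⟨m, rfl⟩, ham⟩ := hsub' (Set.mem_insert a s)
        exact ⟨max N m, Set.insert_subset (hFmono (le_max_right N m) ham)
          (hN.trans (hFmono (le_max_left N m)))⟩
      have hN : ∃ N, T ⊆ F N := key T hTfin hT𝒲
      obtain ⟨N, hN⟩ := hN
      refine ⟨⋃₀ F N, ⟨F N, ⟨N, rfl⟩, rfl⟩, ?_⟩
      intro y hyS
      have hy𝒰 : y ∈ ⋃₀ 𝒰 := by rw [h𝒰univ]; trivial
      obtain ⟨U, hU, hyU⟩ := hy𝒰
      exact ⟨U, hN ⟨hU, ⟨y, hyS, hyU⟩⟩, hyU⟩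
  have h𝒲cov : 𝒲 ∈ G.Cov := by
    have := G.transitivity (Set.range F) hΦcov hVUcov
    rwa [Set.sUnion_range] at this
  exact ⟨𝒲, h𝒲cov, Set.countable_iUnion (fun n => (hFfin n).countable),
    fun U hU => h𝒰small U (h𝒲sub hU), hWuniv⟩
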